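/- arXiv:1410.2500 — 4 statements merged into one kernel-verified Lean document; each statement's English description precedes it below -/
import Mathlib

section
/- The out-of-sample error rate of the full classifier satisfies the inclusion–exclusion identity p* = Σ_{S⊆R} Σ_{T⊆R−S} (−1)^{|T|} P(C_{S,T}), where the sum ranges over all subsets S of R and all subsets T of R−S. -/
section EarlyLemmas


open List

attribute [local instance] Classical.propDecidable

namespace KnnIE

/-- step: strict sortedness from sorted + nodup -/
lemma pairwise_lt_of_le_nodup {l : List ℝ} (h1 : l.Pairwise (· ≤ ·)) (h2 : l.Nodup) :
    l.Pairwise (· < ·) :=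
  (h1.and h2).imp fun h => lt_of_le_of_ne h.1 h.2

/-- membership in the `k`-prefix of a strictly key-sorted list, via counting -/
lemma mem_take_iff_count {α : Type*} (key : α → ℝ) :
    ∀ (s : List α) (_ : (s.map key).Pairwise (· < ·)) (k : ℕ) (e : α),
      e ∈ s.take k ↔ e ∈ s ∧ s.countP (fun e' => decide (key e' ≤ key e)) ≤ k := by
  intro s
  induction s with
  | nil => simp
  | cons a t ih =>
    intro hs k e
    have hs' : (t.map key).Pairwise (· < ·) := (pairwise_cons.mp hs).2
    have hlt : ∀ b ∈ t, key a < key b := by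
      intro b hb
      exact (pairwise_cons.mp hs).1 _ (mem_map_of_mem (f := key) hb)
    match k with
    | 0 =>
      simp only [take_zero, not_mem_nil, false_iff, not_and, not_le]
      intro he
      have : 0 < (a :: t).countP (fun e' => decide (key e' ≤ key e)) := by
        rw [countP_pos_iff]
        exact ⟨e, he, by simp⟩
      omega
    | (k'+1) =>
      simp only [take_succ_cons, mem_cons]
      by_cases hea : e = a
      · subst hea
        have h0 : t.countP (fun e' => decide (key e' ≤ key e)) = 0 := by
          rw [countP_eq_zero]
          intro b hb
          simpa using not_le.mpr (hlt b hb)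
        simp [countP_cons, h0]
      · simp only [hea, false_or]
        rw [ih hs' k' e]
        by_cases het : e ∈ t
        · have hcc : (a :: t).countP (fun e' => decide (key e' ≤ key e)) =
              t.countP (fun e' => decide (key e' ≤ key e)) + 1 := by
            rw [countP_cons]
            simp [le_of_lt (hlt e het)]
          rw [hcc]
          constructor
          · rintro ⟨h, hc⟩; exact ⟨h, by omega⟩
          · rintro ⟨h, hc⟩; exact ⟨h, by omega⟩
        · simp [het]

/-- `getD (k-1)` of a sorted real list compared to a threshold, via counting -/
lemma getD_le_iff_count :
    ∀ (l : List ℝ) (_ : l.Pairwise (· ≤ ·)) (k : ℕ) (_ : 1 ≤ k) (_ : k ≤ l.length) (t : ℝ),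
      l.getD (k-1) 0 ≤ t ↔ k ≤ l.countP (fun a => decide (a ≤ t)) := by
  intro l
  induction l with
  | nil => intro _ k h1 h2; simp at h2; omega
  | cons a l' ih =>
    intro hs k h1 h2 t
    have hal : ∀ b ∈ l', a ≤ b := (pairwise_cons.mp hs).1
    have hs' : l'.Pairwise (· ≤ ·) := (pairwise_cons.mp hs).2
    match k with
    | 1 =>
      simp only [Nat.sub_self, getD_cons_zero, countP_cons]
      constructor
      · intro h; have : 0 < (if (decide (a ≤ t)) = true then 1 else 0) := by simp [h]
        omega
      · intro h
        by_cases hat : a ≤ t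
        · exact hat
        · exfalso
          have h0 : l'.countP (fun b => decide (b ≤ t)) = 0 := by
            rw [countP_eq_zero]
            intro b hb
            simp only [decide_eq_true_eq]
            exact fun hbt => hat (le_trans (hal b hb) hbt)
          simp [h0, hat] at h
    | (k'+2) =>
      have hk' : 1 ≤ k' + 1 := by omega
      have hl2 : k' + 1 ≤ l'.length := by simp at h2; omega
      have hget : (a :: l').getD (k'+2-1) 0 = l'.getD (k'+1-1) 0 := by
        norm_num [List.getD_cons_succ]
      rw [hget, ih hs' (k'+1) hk' hl2 t, countP_cons]
      by_cases hat : a ≤ t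
      · simp only [hat]
        simp
        try omega
      · have h0 : l'.countP (fun b => decide (b ≤ t)) = 0 := by
          rw [countP_eq_zero]
          intro b hb
          simp only [decide_eq_true_eq]
          exact fun hbt => hat (le_trans (hal b hb) hbt)
        simp [h0, hat]
        try omega

end KnnIE

namespace P2
open KnnIE List
attribute [local instance] Classical.propDecidable

lemma eq_of_map_eq_of_perm {α β : Type*} {f : α → β} :
    ∀ {l₁ l₂ : List α}, l₁ ~ l₂ → l₁.map f = l₂.map f →
      (∀ a ∈ l₁, ∀ b ∈ l₁, f a = f b → a = b) → l₁ = l₂ := by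
  intro l₁
  induction l₁ with
  | nil => intro l₂ hp _ _; simpa using hp.symm
  | cons a t₁ ih =>
    intro l₂ hp hm hinj
    match l₂ with
    | [] => exact absurd hp.symm (by simp)
    | b :: t₂ =>
      simp only [map_cons, cons.injEq] at hm
      have hb : b ∈ a :: t₁ := hp.symm.subset (mem_cons_self (a := b) (l := t₂))
      have hab : a = b := hinj a (mem_cons_self (a := a) (l := t₁)) b hb hm.1
      subst hab
      have := ih (hp.cons_inv) hm.2
        (fun x hx y hy => hinj x (mem_cons_of_mem a hx) y (mem_cons_of_mem a hy))
      rw [this]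

lemma countP_eq_of_sublist {α : Type*} (p : α → Bool) :
    ∀ {A B : List α}, A.Sublist B → B.Nodup →
      (∀ b ∈ B, b ∉ A → ¬ p b) → B.countP p = A.countP p := by
  intro A B hAB
  induction hAB with
  | slnil => simp
  | @cons A' B' b hs ih =>
    intro hnd hx
    have hbB : b ∉ B' := (nodup_cons.mp hnd).1
    have hbA : b ∉ A' := fun h => hbB (hs.subset h)
    have hpb : ¬ p b = true := hx b mem_cons_self hbA
    rw [countP_cons]
    rw [ih (nodup_cons.mp hnd).2 (fun x hxB hxA => hx x (mem_cons_of_mem b hxB) hxA)]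
    simp [hpb]
  | @cons_cons A' B' b hs ih =>
    intro hnd hx
    have hbB : b ∉ B' := (nodup_cons.mp hnd).1
    rw [countP_cons, countP_cons, ih (nodup_cons.mp hnd).2]
    intro x hxB hxA
    have hxb : x ≠ b := fun h => hbB (h ▸ hxB)
    exact hx x (mem_cons_of_mem b hxB) (by simp [hxb, hxA])

lemma take_mergeSort_key_eq {α : Type*} (key : α → ℝ) (A B : List α) (k : ℕ)
    (hAB : A.Sublist B) (hnd : (B.map key).Nodup) (_hkA : k ≤ A.length)
    (H : ∀ e ∈ B, e ∉ A → k ≤ A.countP (fun e' => decide (key e' < key e))) :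
    (A.mergeSort (fun a b => decide (key a ≤ key b))).take k =
    (B.mergeSort (fun a b => decide (key a ≤ key b))).take k := by
  set cmp : α → α → Bool := fun a b => decide (key a ≤ key b) with hcmp
  have htrans : ∀ (a b c : α), cmp a b → cmp b c → cmp a c := by
    intro a b c
    simp only [hcmp, decide_eq_true_eq]
    exact le_trans
  have htot : ∀ (a b : α), cmp a b || cmp b a := by
    intro a b
    simp only [hcmp]
    rcases le_total (key a) (key b) with h | h <;> simp [h]
  set sA := A.mergeSort cmp with hsA
  set sB := B.mergeSort cmp with hsB
  have hpA : sA ~ A := mergeSort_perm A cmp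
  have hpB : sB ~ B := mergeSort_perm B cmp
  have hsortA : (sA.map key).Pairwise (· ≤ ·) := by
    rw [pairwise_map]
    exact (pairwise_mergeSort htrans htot A).imp (fun h => by simpa [hcmp] using h)
  have hsortB : (sB.map key).Pairwise (· ≤ ·) := by
    rw [pairwise_map]
    exact (pairwise_mergeSort htrans htot B).imp (fun h => by simpa [hcmp] using h)
  have hndB : (sB.map key).Nodup := ((hpB.map key).nodup_iff).mpr hnd
  have hndA : (sA.map key).Nodup := ((hpA.map key).nodup_iff).mpr ((hAB.map key).nodup hnd)
  have hstrictA := pairwise_lt_of_le_nodup hsortA hndA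
  have hstrictB := pairwise_lt_of_le_nodup hsortB hndB
  have hBnd : B.Nodup := hnd.of_map
  have hAnd : A.Nodup := hAB.nodup hBnd
  -- membership iff
  have hmem : ∀ e, e ∈ sA.take k ↔ e ∈ sB.take k := by
    intro e
    rw [mem_take_iff_count key sA hstrictA k e, mem_take_iff_count key sB hstrictB k e,
      hpA.mem_iff, hpB.mem_iff, hpA.countP_eq, hpB.countP_eq]
    constructor
    · rintro ⟨heA, hcA⟩
      refine ⟨hAB.subset heA, ?_⟩
      -- show countP B ≤ k : every element of B \ A has key > key e
      have hno : ∀ b ∈ B, b ∉ A → ¬ (decide (key b ≤ key e)) = true := by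
        intro b hbB hbA hble
        simp only [decide_eq_true_eq] at hble
        have hH := H b hbB hbA
        -- countP A (≤ key e) ≥ 1 + countP A (< key b)
        have hper : A ~ e :: A.erase e := perm_cons_erase heA
        have h1 : A.countP (fun e' => decide (key e' ≤ key e)) =
            1 + (A.erase e).countP (fun e' => decide (key e' ≤ key e)) := by
          rw [hper.countP_eq, countP_cons]
          simp [Nat.add_comm]
        have h2 : (A.erase e).countP (fun e' => decide (key e' < key b)) ≤
            (A.erase e).countP (fun e' => decide (key e' ≤ key e)) := by
          apply countP_mono_left
          intro x _
          simp only [decide_eq_true_eq]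
          intro hx
          exact le_trans (le_of_lt hx) hble
        have h3 : A.countP (fun e' => decide (key e' < key b)) =
            (A.erase e).countP (fun e' => decide (key e' < key b)) := by
          rw [hper.countP_eq, countP_cons]
          simp [not_lt.mpr hble]
        omega
      have := countP_eq_of_sublist (fun e' => decide (key e' ≤ key e)) hAB hBnd hno
      omega
    · rintro ⟨heB, hcB⟩
      have heA : e ∈ A := by
        by_contra heA
        have hH := H e heB heA
        have hper : B ~ e :: B.erase e := perm_cons_erase heB
        have h1 : B.countP (fun e' => decide (key e' ≤ key e)) =
            1 + (B.erase e).countP (fun e' => decide (key e' ≤ key e)) := by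
          rw [hper.countP_eq, countP_cons]
          simp [Nat.add_comm]
        have h2 : (B.erase e).countP (fun e' => decide (key e' < key e)) ≤
            (B.erase e).countP (fun e' => decide (key e' ≤ key e)) := by
          apply countP_mono_left
          intro x _
          simp only [decide_eq_true_eq]
          exact le_of_lt
        have h3 : B.countP (fun e' => decide (key e' < key e)) =
            (B.erase e).countP (fun e' => decide (key e' < key e)) := by
          rw [hper.countP_eq, countP_cons]
          simp
        have h4 : A.countP (fun e' => decide (key e' < key e)) ≤
            B.countP (fun e' => decide (key e' < key e)) := hAB.countP_le
        omega
      have h5 : A.countP (fun e' => decide (key e' ≤ key e)) ≤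
          B.countP (fun e' => decide (key e' ≤ key e)) := hAB.countP_le
      exact ⟨heA, le_trans h5 hcB⟩
  -- both are nodup
  have hndtA : (sA.take k).Nodup := ((take_sublist k sA).map key |>.nodup hndA).of_map
  have hndtB : (sB.take k).Nodup := ((take_sublist k sB).map key |>.nodup hndB).of_map
  have hperm : sA.take k ~ sB.take k := (perm_ext_iff_of_nodup hndtA hndtB).mpr hmem
  -- sorted key maps
  have hstA : ((sA.take k).map key).Pairwise (· ≤ ·) :=
    hsortA.sublist ((take_sublist k sA).map key)
  have hstB : ((sB.take k).map key).Pairwise (· ≤ ·) :=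
    hsortB.sublist ((take_sublist k sB).map key)
  have hmapeq : (sA.take k).map key = (sB.take k).map key :=
    List.Perm.eq_of_pairwise' hstA hstB (hperm.map key)
  exact eq_of_map_eq_of_perm hperm hmapeq
    (inj_on_of_nodup_map (hmapeq ▸ ((take_sublist k sB).map key |>.nodup hndB) : _))

end P2

end EarlyLemmas



open MeasureTheory Finset

noncomputable section

attribute [local instance] Classical.propDecidable

/-- The `k`-nearest-neighbor classifier based on the labeled sample `G`:
it labels `x` by the majority label among the `k` examples of `G` closest to `x`. -/
def knnLabel {X : Type*} [MetricSpace X] (k : ℕ) (G : List (X × Bool)) (x : X) : Bool :=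
  decide (k < 2 * (((G.mergeSort fun a b => decide (dist x a.1 ≤ dist x b.1)).take k).filter
      (fun p => p.2)).length)

/-- Distance from `x` to its `k`-th nearest neighbor among the points of the list `L`. -/
def kthDist {X : Type*} [MetricSpace X] (k : ℕ) (L : List X) (x : X) : ℝ :=
  ((L.map (dist x)).mergeSort fun a b => decide (a ≤ b)).getD (k - 1) 0

/-- Indices of the `i`-th block of `m` consecutive examples. -/
def blockIdx (n m : ℕ) {r : ℕ} (i : Fin r) : Finset (Fin n) :=
  Finset.univ.filter fun j => m * i.1 ≤ j.1 ∧ j.1 < m * (i.1 + 1)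

/-- Indices of `V_S`, the union of the validation subsets indexed by `S`. -/
def VIdx (n m r : ℕ) (S : Finset (Fin r)) : Finset (Fin n) :=
  S.biUnion (blockIdx n m)

/-- Indices of `(F − V) ∪ V_S`. -/
def trainIdx (n m r : ℕ) (S : Finset (Fin r)) : Finset (Fin n) :=
  (VIdx n m r Finset.univ)ᶜ ∪ VIdx n m r S

/-- The sub-sample of `F` indexed by `A` (as a list, in index order). -/
def subList {n : ℕ} {α : Type*} (F : Fin n → α) (A : Finset (Fin n)) : List α :=
  (A.sort (· ≤ ·)).map F

/-- `g_S`, the `k`-nn classifier based on `(F − V) ∪ V_S`. -/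
def gS {X : Type*} [MetricSpace X] (n m r k : ℕ) (F : Fin n → X × Bool)
    (S : Finset (Fin r)) (x : X) : Bool :=
  knnLabel k (subList F (trainIdx n m r S)) x

/-- `h(x)`, the distance from `x` to its `k`-th nearest neighbor in `F − V`. -/
def hDist {X : Type*} [MetricSpace X] (n m r k : ℕ) (F : Fin n → X × Bool) (x : X) : ℝ :=
  kthDist k (subList (fun j => (F j).1) (VIdx n m r Finset.univ)ᶜ) x

/-- `c_S(x)`: every `V_i` with `i ∈ S` has an example closer to `x` than `h(x)`. -/
def cCond {X : Type*} [MetricSpace X] (n m r k : ℕ) (F : Fin n → X × Bool)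
    (S : Finset (Fin r)) (x : X) : Prop :=
  ∀ i ∈ S, ∃ j ∈ blockIdx n m i, dist x (F j).1 < hDist n m r k F x

/-- `b_S(x)`: `c_S(x)` holds and no `V_i` with `i ∉ S` has an example closer to `x`
than `h(x)`. -/
def bCond {X : Type*} [MetricSpace X] (n m r k : ℕ) (F : Fin n → X × Bool)
    (S : Finset (Fin r)) (x : X) : Prop :=
  cCond n m r k F S x ∧
    ∀ i ∉ S, ¬ ∃ j ∈ blockIdx n m i, dist x (F j).1 < hDist n m r k F x

/-- The set `C_{S,T} = {(x,y) : c_{S∪T}(x) ∧ g_S(x) ≠ y}`. -/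
def CST {X : Type*} [MetricSpace X] (n m r k : ℕ) (F : Fin n → X × Bool)
    (S T : Finset (Fin r)) : Set (X × Bool) :=
  {p | cCond n m r k F (S ∪ T) p.1 ∧ gS n m r k F S p.1 ≠ p.2}

/-- Empirical frequency of the event `E` among the examples of `F` indexed by `A`. -/
def empFreq {X : Type*} {n : ℕ} (F : Fin n → X × Bool) (A : Finset (Fin n))
    (E : Set (X × Bool)) : ℝ :=
  ((A.filter fun j => F j ∈ E).card : ℝ) / (A.card : ℝ)

/-- `p*`, the out-of-sample error rate of the full classifier `g* = g_R`. -/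
def pStar {X : Type*} [MetricSpace X] [MeasurableSpace X] (n m r k : ℕ)
    (D : Measure (X × Bool)) (F : Fin n → X × Bool) : ℝ :=
  (D {p : X × Bool | gS n m r k F Finset.univ p.1 ≠ p.2}).toReal

/-- The pairs `(S, T)` with `S ⊆ R`, `T ⊆ R − S` and `S ∪ T ≠ R`. -/
def pairSet (r : ℕ) : Finset (Finset (Fin r) × Finset (Fin r)) :=
  Finset.univ.filter fun p => p.2 ⊆ p.1ᶜ ∧ p.1 ∪ p.2 ≠ Finset.univ

/-- `t_V`, the part of the inclusion-exclusion formula with `S ∪ T ≠ R`. -/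
def tV {X : Type*} [MetricSpace X] [MeasurableSpace X] (n m r k : ℕ)
    (D : Measure (X × Bool)) (F : Fin n → X × Bool) : ℝ :=
  ∑ p ∈ pairSet r, (-1 : ℝ) ^ p.2.card * (D (CST n m r k F p.1 p.2)).toReal

/-- `s_V`, the empirical counterpart of `t_V`, validated on `V_{R−(S∪T)}`. -/
def sV {X : Type*} [MetricSpace X] (n m r k : ℕ) (F : Fin n → X × Bool) : ℝ :=
  ∑ p ∈ pairSet r,
    (-1 : ℝ) ^ p.2.card * empFreq F (VIdx n m r (p.1 ∪ p.2)ᶜ) (CST n m r k F p.1 p.2)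

/-- Indices of `W`, the last `w` examples of `F`. -/
def WIdx (n w : ℕ) : Finset (Fin n) :=
  Finset.univ.filter fun j => n - w ≤ j.1

/-- `c_R'(x)`: every `V_i` has an example closer to `x` than the `k`-th nearest neighbor
of `x` in `(F − V) − W`. -/
def cR' {X : Type*} [MetricSpace X] (n m r k w : ℕ) (F : Fin n → X × Bool) (x : X) : Prop :=
  ∀ i : Fin r, ∃ j ∈ blockIdx n m i,
    dist x (F j).1 <
      kthDist k (subList (fun j => (F j).1) ((VIdx n m r Finset.univ)ᶜ \ WIdx n w)) x

/-- `P_W(c_R'(x))`, the empirical frequency of `c_R'` on `W`. -/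
def PWfreq {X : Type*} [MetricSpace X] (n m r k w : ℕ) (F : Fin n → X × Bool) : ℝ :=
  (((WIdx n w).filter fun j => cR' n m r k w F (F j).1).card : ℝ) / (w : ℝ)

/-- Almost-sure distinctness of distances: distances from `x` to the sample inputs are
pairwise distinct, and distances from each sample input to the others are pairwise
distinct. -/
def DistinctDists {X : Type*} [MetricSpace X] {n : ℕ} (F : Fin n → X × Bool) (x : X) : Prop :=
  (∀ i j : Fin n, i ≠ j → dist x (F i).1 ≠ dist x (F j).1) ∧
  (∀ i j l : Fin n, i ≠ j → i ≠ l → j ≠ l → dist (F i).1 (F j).1 ≠ dist (F i).1 (F l).1)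

/-- The error bound range `ε` of Theorem 1. -/
def epsBound {X : Type*} [MetricSpace X] (n m r k w : ℕ) (δ δW : ℝ)
    (F : Fin n → X × Bool) : ℝ :=
  (r : ℝ) * 3 ^ (r - 1) * Real.sqrt (Real.log (2 * r / δ) / (2 * m)) +
    2 ^ r * (PWfreq n m r k w F + Real.sqrt (Real.log (2 / δW) / (2 * w)))

end


section MeasLemmas
namespace KnnM
open KnnIE MeasureTheory
attribute [local instance] Classical.propDecidable

variable {X : Type*} [MetricSpace X] [MeasurableSpace X] [BorelSpace X]

lemma measurable_decideP {p : X → Prop} (h : MeasurableSet {x | p x}) :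
    Measurable (fun x => decide (p x)) := by
  have heq : (fun x => decide (p x)) = fun x => if p x then true else false := by
    funext x; by_cases hx : p x <;> simp [hx]
  rw [heq]
  exact Measurable.ite h measurable_const measurable_const

lemma measurable_countP {α : Type*} (L : List α) (q : X → α → Bool)
    (hq : ∀ a, Measurable fun x => q x a) :
    Measurable fun x => (L.countP (q x) : ℕ) := by
  induction L with
  | nil =>
    simp only [List.countP_nil]
    exact measurable_const
  | cons a t ih =>
    have heq : (fun x => (a :: t).countP (q x)) =
        fun x => t.countP (q x) + (if q x a = true then 1 else 0) := by
      funext x; rw [List.countP_cons]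
    rw [heq]
    have hset : MeasurableSet {x | q x a = true} := by
      have h1 := (hq a) (MeasurableSet.singleton true)
      exact h1
    exact ih.add (Measurable.ite hset measurable_const measurable_const)

lemma measurable_kthDist (k : ℕ) (L : List X) (hk : 1 ≤ k) (hkL : k ≤ L.length) :
    Measurable fun x => kthDist k L x := by
  apply measurable_of_Iic
  intro t
  have htrans : ∀ (a b c : ℝ), (fun a b => decide (a ≤ b)) a b →
      (fun a b => decide (a ≤ b)) b c → (fun a b => decide (a ≤ b)) a c := by
    intro a b c
    simp only [decide_eq_true_eq]
    exact le_trans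
  have htot : ∀ (a b : ℝ), ((fun a b => decide (a ≤ b)) a b ||
      (fun a b => decide (a ≤ b)) b a) = true := by
    intro a b
    rcases le_total a b with h | h <;> simp [h]
  have hseteq : (fun x => kthDist k L x) ⁻¹' Set.Iic t =
      {x | k ≤ L.countP (fun p => decide (dist x p ≤ t))} := by
    ext x
    simp only [Set.mem_preimage, Set.mem_Iic, Set.mem_setOf_eq]
    unfold kthDist
    have hsorted : ((L.map (dist x)).mergeSort (fun a b => decide (a ≤ b))).Pairwise
        (· ≤ ·) := by
      exact (List.pairwise_mergeSort htrans htot (L.map (dist x))).imp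
        (fun h => by simpa using h)
    have hlen : k ≤ ((L.map (dist x)).mergeSort (fun a b => decide (a ≤ b))).length := by
      rw [List.length_mergeSort, List.length_map]; exact hkL
    rw [getD_le_iff_count _ hsorted k hk hlen t,
      (List.mergeSort_perm (L.map (dist x)) _).countP_eq, List.countP_map]
    rfl
  rw [hseteq]
  have hN : Measurable fun x => (L.countP (fun p => decide (dist x p ≤ t)) : ℕ) := by
    apply measurable_countP
    intro a
    apply measurable_decideP
    exact measurableSet_le ((continuous_id.dist continuous_const).measurable) measurable_const
  exact hN measurableSet_Ici

lemma measurable_hDist (n m r k : ℕ) (F : Fin n → X × Bool) (hk : 1 ≤ k)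
    (hcard : k ≤ ((VIdx n m r (Finset.univ : Finset (Fin r)))ᶜ).card) :
    Measurable fun x => hDist n m r k F x := by
  apply measurable_kthDist k _ hk
  unfold subList
  rw [List.length_map, Finset.length_sort]
  exact hcard

lemma measurable_knnLabel (k : ℕ) (L : List (X × Bool)) :
    Measurable fun x => knnLabel k L x := by
  set sv : (Fin L.length × Fin L.length → Bool) → (X × Bool) → (X × Bool) → Bool :=
    fun v a b =>
      if h : (∃ i : Fin L.length, L[i] = a) ∧ (∃ i : Fin L.length, L[i] = b) then
        v (h.1.choose, h.2.choose)
      else true with hsv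
  set c : X → (Fin L.length × Fin L.length → Bool) := fun x q =>
    decide (dist x (L[q.1.1]'q.1.2).1 ≤ dist x (L[q.2.1]'q.2.2).1) with hc
  have key : ∀ x, knnLabel k L x =
      (fun v => decide (k < 2 *
        (((L.mergeSort (sv v)).take k).filter (fun p => p.2)).length)) (c x) := by
    intro x
    have hms : L.mergeSort (fun a b => decide (dist x a.1 ≤ dist x b.1)) =
        L.mergeSort (sv (c x)) := by
      have hmm := List.map_mergeSort (f := id)
        (r := fun a b : X × Bool => decide (dist x a.1 ≤ dist x b.1)) (s := sv (c x)) (l := L) ?_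
      · simpa using hmm
      · intro a ha b hb
        have hA : ∃ i : Fin L.length, L[i] = a := by
          obtain ⟨i, hi, he⟩ := List.mem_iff_getElem.mp ha
          exact ⟨⟨i, hi⟩, he⟩
        have hB : ∃ i : Fin L.length, L[i] = b := by
          obtain ⟨i, hi, he⟩ := List.mem_iff_getElem.mp hb
          exact ⟨⟨i, hi⟩, he⟩
        have hcval : ∀ (i j : Fin L.length) (a b : X × Bool), L[i] = a → L[j] = b →
            c x (i, j) = decide (dist x a.1 ≤ dist x b.1) := by
          intro i j a b hi hj
          simp only [hc]
          subst hi; subst hj; rfl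
        simp only [hsv, id]
        rw [dif_pos (And.intro hA hB)]
        exact (hcval (And.intro hA hB).1.choose (And.intro hA hB).2.choose a b
          (And.intro hA hB).1.choose_spec (And.intro hA hB).2.choose_spec).symm
    unfold knnLabel
    rw [hms]
  have hfun : (fun x => knnLabel k L x) = (fun v => decide (k < 2 *
        (((L.mergeSort (sv v)).take k).filter (fun p => p.2)).length)) ∘ c := by
    funext x; exact key x
  rw [hfun]
  have hc_meas : Measurable c := by
    apply measurable_pi_lambda
    intro q
    apply measurable_decideP
    exact measurableSet_le ((continuous_id.dist continuous_const).measurable)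
      ((continuous_id.dist continuous_const).measurable)
  exact (measurable_of_countable _).comp hc_meas

lemma measurable_gS (n m r k : ℕ) (F : Fin n → X × Bool) (S : Finset (Fin r)) :
    Measurable fun x => gS n m r k F S x := measurable_knnLabel k _

lemma measurableSet_cCond (n m r k : ℕ) (F : Fin n → X × Bool) (S : Finset (Fin r))
    (hk : 1 ≤ k) (hcard : k ≤ ((VIdx n m r (Finset.univ : Finset (Fin r)))ᶜ).card) :
    MeasurableSet {x : X | cCond n m r k F S x} := by
  have hmeq : {x : X | cCond n m r k F S x} =
      ⋂ i ∈ (S : Set (Fin r)), ⋃ j ∈ ((blockIdx n m i : Finset (Fin n)) : Set (Fin n)),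
        {x | dist x (F j).1 < hDist n m r k F x} := by
    ext x
    simp [cCond]
  rw [hmeq]
  exact MeasurableSet.biInter (Set.to_countable _) fun i _ =>
    MeasurableSet.biUnion (Set.to_countable _) fun j _ =>
      measurableSet_lt ((continuous_id.dist continuous_const).measurable)
        (measurable_hDist n m r k F hk hcard)

lemma measurableSet_err (n m r k : ℕ) (F : Fin n → X × Bool) (S : Finset (Fin r)) :
    MeasurableSet {p : X × Bool | gS n m r k F S p.1 ≠ p.2} := by
  have heq : {p : X × Bool | gS n m r k F S p.1 ≠ p.2} =
      (fun p : X × Bool => (gS n m r k F S p.1, p.2)) ⁻¹' {q : Bool × Bool | q.1 ≠ q.2} := by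
    ext p; simp
  rw [heq]
  exact (((measurable_gS n m r k F S).comp measurable_fst).prodMk measurable_snd)
    ((Set.to_countable _).measurableSet)

lemma measurableSet_CST (n m r k : ℕ) (F : Fin n → X × Bool) (S T : Finset (Fin r))
    (hk : 1 ≤ k) (hcard : k ≤ ((VIdx n m r (Finset.univ : Finset (Fin r)))ᶜ).card) :
    MeasurableSet (CST n m r k F S T) := by
  have heq : CST n m r k F S T =
      (Prod.fst ⁻¹' {x | cCond n m r k F (S ∪ T) x}) ∩
        {p : X × Bool | gS n m r k F S p.1 ≠ p.2} := by
    ext p; simp [CST]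
  rw [heq]
  exact (measurable_fst (measurableSet_cCond n m r k F (S ∪ T) hk hcard)).inter
    (measurableSet_err n m r k F S)

end KnnM
end MeasLemmas


section GeomLemmas
namespace KnnP
open KnnIE P2 KnnM Finset
attribute [local instance] Classical.propDecidable

lemma card_blockIdx_le (n m : ℕ) {r : ℕ} (i : Fin r) : (blockIdx n m i).card ≤ m := by
  have h : (blockIdx n m i).card ≤ (Finset.Ico (m * i.1) (m * (i.1 + 1))).card := by
    apply Finset.card_le_card_of_injOn (fun j => j.1)
    · intro j hj
      unfold blockIdx at hj
      rw [Finset.mem_coe, Finset.mem_filter] at hj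
      simp only [Finset.mem_coe, Finset.mem_Ico]
      exact hj.2
    · intro a _ b _ hab
      exact Fin.val_injective hab
  rw [Nat.card_Ico] at h
  have : m * (i.1 + 1) - m * i.1 = m := by rw [Nat.mul_succ]; omega
  omega

lemma card_VIdx_univ_le (n m r : ℕ) :
    (VIdx n m r (Finset.univ : Finset (Fin r))).card ≤ r * m := by
  refine le_trans (Finset.card_biUnion_le) ?_
  have h1 : ∑ i : Fin r, (blockIdx n m i).card ≤ ∑ _i : Fin r, m :=
    Finset.sum_le_sum fun i _ => card_blockIdx_le n m i
  simpa using h1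

lemma card_compl_V {n m r k : ℕ} (hn : r * m ≤ n - k) (hkn : k ≤ n) :
    k ≤ ((VIdx n m r (Finset.univ : Finset (Fin r)))ᶜ).card := by
  rw [Finset.card_compl, Fintype.card_fin]
  have := card_VIdx_univ_le n m r
  omega

lemma length_subList {n : ℕ} {α : Type*} (F : Fin n → α) (A : Finset (Fin n)) :
    (subList F A).length = A.card := by
  unfold subList
  rw [List.length_map, Finset.length_sort]

lemma subList_sublist {n : ℕ} {α : Type*} (F : Fin n → α) {A B : Finset (Fin n)}
    (h : A ⊆ B) : (subList F A).Sublist (subList F B) := by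
  unfold subList
  apply List.Sublist.map
  apply List.sublist_of_subperm_of_pairwise (r := (· ≤ · : Fin n → Fin n → Prop))
  · apply List.subperm_of_subset (Finset.sort_nodup _ _)
    intro a ha
    rw [Finset.mem_sort] at ha ⊢
    exact h ha
  · exact Finset.pairwise_sort _ _
  · exact Finset.pairwise_sort _ _

lemma mem_subList_iff {n : ℕ} {α : Type*} {F : Fin n → α} {A : Finset (Fin n)} {e : α} :
    e ∈ subList F A ↔ ∃ j ∈ A, F j = e := by
  unfold subList
  simp [Finset.mem_sort]

lemma trainIdx_univ (n m r : ℕ) :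
    trainIdx n m r (Finset.univ : Finset (Fin r)) = Finset.univ := by
  unfold trainIdx
  ext j; simp; exact em _ |>.symm.imp id id

lemma subList_fst {n : ℕ} {X : Type*} (F : Fin n → X × Bool) (A : Finset (Fin n)) :
    subList (fun j => (F j).1) A = (subList F A).map (fun p => p.1) := by
  unfold subList
  rw [List.map_map]
  rfl

variable {X : Type*} [MetricSpace X]

/-- at least `k` examples of `F − V` are within `hDist` of `x` -/
lemma count_le_hDist (n m r k : ℕ) (F : Fin n → X × Bool) (x : X) (hk : 1 ≤ k)
    (hcard : k ≤ ((VIdx n m r (Finset.univ : Finset (Fin r)))ᶜ).card) :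
    k ≤ (subList F ((VIdx n m r (Finset.univ : Finset (Fin r)))ᶜ)).countP
      (fun a => decide (dist x a.1 ≤ hDist n m r k F x)) := by
  set A0 := subList F ((VIdx n m r (Finset.univ : Finset (Fin r)))ᶜ) with hA0
  set h := hDist n m r k F x with hh
  have hkey : subList (fun j => (F j).1) ((VIdx n m r (Finset.univ : Finset (Fin r)))ᶜ) =
      A0.map (fun p => p.1) := subList_fst F _
  have hlen : k ≤ A0.length := by rw [length_subList]; exact hcard
  -- h = getD (k-1) of sorted key list
  have htrans : ∀ (a b c : ℝ), (fun a b => decide (a ≤ b)) a b →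
      (fun a b => decide (a ≤ b)) b c → (fun a b => decide (a ≤ b)) a c := by
    intro a b c
    simp only [decide_eq_true_eq]
    exact le_trans
  have htot : ∀ (a b : ℝ), ((fun a b => decide (a ≤ b)) a b ||
      (fun a b => decide (a ≤ b)) b a) = true := by
    intro a b
    rcases le_total a b with hab | hab <;> simp [hab]
  set l := ((A0.map (fun p => p.1)).map (dist x)).mergeSort (fun a b => decide (a ≤ b)) with hl
  have hsorted : l.Pairwise (· ≤ ·) :=
    (List.pairwise_mergeSort htrans htot _).imp (fun hab => by simpa using hab)
  have hlen2 : k ≤ l.length := by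
    rw [hl, List.length_mergeSort, List.length_map, List.length_map]
    exact hlen
  have hval : h = l.getD (k-1) 0 := by
    rw [hh]
    unfold hDist kthDist
    rw [hkey]
  have hcount : k ≤ l.countP (fun a => decide (a ≤ h)) := by
    rw [← getD_le_iff_count l hsorted k hk hlen2 h, ← hval]
  rw [hl, (List.mergeSort_perm _ _).countP_eq, List.countP_map, List.countP_map] at hcount
  exact hcount

/-- Key geometric lemma: if no block outside `S` contains an example closer than `hDist`,
then `g_S` agrees with the full classifier at `x`. -/
lemma gS_eq_full (n m r k : ℕ) (F : Fin n → X × Bool) (x : X) (S : Finset (Fin r))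
    (hd : ∀ i j : Fin n, i ≠ j → dist x (F i).1 ≠ dist x (F j).1)
    (hk : 1 ≤ k) (hcard : k ≤ ((VIdx n m r (Finset.univ : Finset (Fin r)))ᶜ).card)
    (hS : ∀ i ∉ S, ¬ ∃ j ∈ blockIdx n m i, dist x (F j).1 < hDist n m r k F x) :
    gS n m r k F S x = gS n m r k F Finset.univ x := by
  set key : X × Bool → ℝ := fun p => dist x p.1 with hkeydef
  set A := subList F (trainIdx n m r S) with hA
  set B := subList F (trainIdx n m r (Finset.univ : Finset (Fin r))) with hB
  have hBuniv : B = subList F (Finset.univ : Finset (Fin n)) := by rw [hB, trainIdx_univ]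
  have hAB : A.Sublist B := subList_sublist F (by rw [trainIdx_univ]; exact Finset.subset_univ _)
  have hnd : (B.map key).Nodup := by
    rw [hBuniv]
    unfold subList
    rw [List.map_map]
    apply List.Nodup.map_on
    · intro i hi j hj hij
      by_contra hne
      exact hd i j hne hij
    · exact Finset.sort_nodup _ _
  have hkA : k ≤ A.length := by
    rw [hA, length_subList]
    refine le_trans hcard (Finset.card_le_card ?_)
    exact Finset.subset_union_left
  have hA0A : (subList F ((VIdx n m r (Finset.univ : Finset (Fin r)))ᶜ)).Sublist A :=
    subList_sublist F Finset.subset_union_left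
  have H : ∀ e ∈ B, e ∉ A → k ≤ A.countP (fun e' => decide (key e' < key e)) := by
    intro e heB heA
    obtain ⟨j, _, hje⟩ := mem_subList_iff.mp (hBuniv ▸ heB)
    have hjA : j ∉ trainIdx n m r S := by
      intro hj
      exact heA (mem_subList_iff.mpr ⟨j, hj, hje⟩)
    have hjV : j ∈ VIdx n m r (Finset.univ : Finset (Fin r)) := by
      by_contra hjV
      exact hjA (Finset.mem_union_left _ (Finset.mem_compl.mpr hjV))
    have hjVS : j ∉ VIdx n m r S := fun hj => hjA (Finset.mem_union_right _ hj)
    obtain ⟨i, _, hji⟩ := Finset.mem_biUnion.mp hjV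
    have hiS : i ∉ S := by
      intro hi
      exact hjVS (Finset.mem_biUnion.mpr ⟨i, hi, hji⟩)
    have hfar : hDist n m r k F x ≤ dist x (F j).1 := by
      by_contra hlt
      exact hS i hiS ⟨j, hji, not_le.mp hlt⟩
    -- k ≤ countP A0 (key ≤ h) ≤ countP A0 (key < key e) ≤ countP A (key < key e)
    have h1 := count_le_hDist n m r k F x hk hcard
    have h2 : (subList F ((VIdx n m r (Finset.univ : Finset (Fin r)))ᶜ)).countP
          (fun a => decide (dist x a.1 ≤ hDist n m r k F x)) ≤
        (subList F ((VIdx n m r (Finset.univ : Finset (Fin r)))ᶜ)).countP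
          (fun e' => decide (key e' < key e)) := by
      apply List.countP_mono_left
      intro a ha
      simp only [decide_eq_true_eq]
      intro hah
      obtain ⟨j', hj', hj'a⟩ := mem_subList_iff.mp ha
      have hjj' : j' ≠ j := by
        intro hjj
        rw [hjj] at hj'
        exact (Finset.mem_compl.mp hj') hjV
      show dist x a.1 < dist x e.1
      have hle2 : dist x a.1 ≤ dist x e.1 := by
        rw [← hje]; exact le_trans hah hfar
      have hne2 : dist x a.1 ≠ dist x e.1 := by
        rw [← hje, ← hj'a]; exact hd j' j hjj'
      exact lt_of_le_of_ne hle2 hne2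
    have h3 := List.Sublist.countP_le (p := fun e' => decide (key e' < key e)) hA0A
    omega
  have htake := take_mergeSort_key_eq key A B k hAB hnd hkA H
  unfold gS knnLabel
  rw [← hA, ← hB]
  have hcmp : (fun a b : X × Bool => decide (dist x a.1 ≤ dist x b.1)) =
      (fun a b => decide (key a ≤ key b)) := rfl
  rw [hcmp, htake]

end KnnP
end GeomLemmas


section PointwiseLemmas
namespace KnnQ
open KnnIE P2 KnnM KnnP Finset
attribute [local instance] Classical.propDecidable

lemma sum_powerset_neg_one_pow_card_real {α : Type*} (A : Finset α) :
    (∑ T ∈ A.powerset, (-1:ℝ)^T.card) = if A = ∅ then 1 else 0 := by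
  classical
  have h := Finset.sum_powerset_neg_one_pow_card (x := A)
  have hcast : ((∑ T ∈ A.powerset, (-1:ℤ)^T.card : ℤ) : ℝ) =
      ∑ T ∈ A.powerset, (-1:ℝ)^T.card := by
    push_cast
    rfl
  rw [← hcast, h]
  split <;> simp

variable {X : Type*} [MetricSpace X]

lemma pointwise_identity (n m r k : ℕ) (F : Fin n → X × Bool) (z : X × Bool)
    (hd : ∀ i j : Fin n, i ≠ j → dist z.1 (F i).1 ≠ dist z.1 (F j).1)
    (hk : 1 ≤ k) (hcard : k ≤ ((VIdx n m r (Finset.univ : Finset (Fin r)))ᶜ).card) :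
    (if gS n m r k F Finset.univ z.1 ≠ z.2 then (1:ℝ) else 0) =
      ∑ S : Finset (Fin r), ∑ T ∈ Sᶜ.powerset,
        (-1 : ℝ)^T.card * (if z ∈ CST n m r k F S T then 1 else 0) := by
  set x := z.1 with hx
  set y := z.2 with hy
  set S₀ : Finset (Fin r) := Finset.univ.filter
    (fun i => ∃ j ∈ blockIdx n m i, dist x (F j).1 < hDist n m r k F x) with hS₀
  have hcS : ∀ U : Finset (Fin r), cCond n m r k F U x ↔ U ⊆ S₀ := by
    intro U
    unfold cCond
    constructor
    · intro hU i hi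
      rw [hS₀, Finset.mem_filter]
      exact ⟨Finset.mem_univ i, hU i hi⟩
    · intro hU i hi
      have := hU hi
      rw [hS₀, Finset.mem_filter] at this
      exact this.2
  have hmemCST : ∀ S T : Finset (Fin r), z ∈ CST n m r k F S T ↔
      ((S ∪ T) ⊆ S₀ ∧ gS n m r k F S x ≠ y) := by
    intro S T
    unfold CST
    rw [Set.mem_setOf_eq, hcS]
  have hsum : ∀ S : Finset (Fin r),
      (∑ T ∈ Sᶜ.powerset, (-1:ℝ)^T.card * (if z ∈ CST n m r k F S T then 1 else 0)) =
        if S = S₀ ∧ gS n m r k F S x ≠ y then 1 else 0 := by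
    intro S
    by_cases hSS : S ⊆ S₀
    · by_cases herr : gS n m r k F S x ≠ y
      · -- main case
        have hterm : ∀ T ∈ Sᶜ.powerset,
            (-1:ℝ)^T.card * (if z ∈ CST n m r k F S T then 1 else 0) =
            if T ⊆ S₀ then (-1:ℝ)^T.card else 0 := by
          intro T _
          by_cases hTS : T ⊆ S₀
          · rw [if_pos hTS, if_pos, mul_one]
            rw [hmemCST]
            exact ⟨Finset.union_subset hSS hTS, herr⟩
          · rw [if_neg hTS, if_neg, mul_zero]
            rw [hmemCST]
            rintro ⟨hsub, -⟩
            exact hTS (le_trans Finset.subset_union_right hsub)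
        rw [Finset.sum_congr rfl hterm]
        have hsplit : (∑ T ∈ Sᶜ.powerset, if T ⊆ S₀ then (-1:ℝ)^T.card else 0) =
            ∑ T ∈ (Sᶜ ∩ S₀).powerset, (-1:ℝ)^T.card := by
          rw [← Finset.sum_subset (Finset.powerset_mono.mpr Finset.inter_subset_left)]
          · apply Finset.sum_congr rfl
            intro T hT
            rw [Finset.mem_powerset] at hT
            exact if_pos (le_trans hT Finset.inter_subset_right)
          · intro T hT hT2
            rw [Finset.mem_powerset] at hT hT2
            exact if_neg (fun hTS => hT2 (Finset.subset_inter hT hTS))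
        rw [hsplit, sum_powerset_neg_one_pow_card_real]
        have hiff : (Sᶜ ∩ S₀ = ∅) ↔ S = S₀ := by
          constructor
          · intro h0
            apply Finset.Subset.antisymm hSS
            intro i hi
            by_contra hiS
            have : i ∈ Sᶜ ∩ S₀ := Finset.mem_inter.mpr ⟨Finset.mem_compl.mpr hiS, hi⟩
            rw [h0] at this
            exact absurd this (Finset.notMem_empty i)
          · intro hSeq
            rw [← hSeq]
            rw [Finset.eq_empty_iff_forall_notMem]
            intro i hi
            rw [Finset.mem_inter, Finset.mem_compl] at hi
            exact hi.1 hi.2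
        by_cases hfin : S = S₀
        · rw [if_pos (hiff.mpr hfin), if_pos ⟨hfin, herr⟩]
        · rw [if_neg (fun h => hfin (hiff.mp h)), if_neg (fun h => hfin h.1)]
      · -- error condition fails: everything is zero
        rw [Finset.sum_eq_zero, if_neg]
        · rintro ⟨-, h⟩
          exact herr h
        · intro T _
          rw [if_neg, mul_zero]
          rw [hmemCST]
          rintro ⟨-, h⟩
          exact herr h
    · -- S ⊄ S₀ : everything is zero
      rw [Finset.sum_eq_zero, if_neg]
      · rintro ⟨h, -⟩
        exact hSS (h ▸ Finset.Subset.refl S₀)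
      · intro T _
        rw [if_neg, mul_zero]
        rw [hmemCST]
        rintro ⟨hsub, -⟩
        exact hSS (le_trans Finset.subset_union_left hsub)
  rw [Finset.sum_congr rfl (fun S _ => hsum S)]
  have hrw : ∀ S : Finset (Fin r), (if S = S₀ ∧ gS n m r k F S x ≠ y then (1:ℝ) else 0) =
      if S = S₀ then (if gS n m r k F S x ≠ y then (1:ℝ) else 0) else 0 := by
    intro S
    by_cases h1 : S = S₀ <;> by_cases h2 : gS n m r k F S x ≠ y <;> simp [h1, h2]
  rw [Finset.sum_congr rfl (fun S _ => hrw S), Finset.sum_ite_eq' Finset.univ S₀]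
  rw [if_pos (Finset.mem_univ S₀)]
  have hgeq : gS n m r k F S₀ x = gS n m r k F Finset.univ x := by
    apply gS_eq_full n m r k F x S₀ hd hk hcard
    intro i hi hex
    apply hi
    rw [hS₀, Finset.mem_filter]
    exact ⟨Finset.mem_univ i, hex⟩
  rw [hgeq]

end KnnQ
end PointwiseLemmas

/-- Inclusion–exclusion identity for the out-of-sample error rate of the full classifier:
`p* = Σ_{S⊆R} Σ_{T⊆R−S} (−1)^{|T|} P(C_{S,T})` (for almost every draw of `F`,
given that nearest-neighbor rankings are almost surely unambiguous). -/
theorem knn_inclusion_exclusion_identity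
    {X : Type*} [MetricSpace X] [MeasurableSpace X] [BorelSpace X]
    (D : MeasureTheory.Measure (X × Bool)) [MeasureTheory.IsProbabilityMeasure D]
    (n r m k : ℕ) (hr : 1 ≤ r) (hm : 1 ≤ m) (hk : 1 ≤ k) (hkodd : Odd k)
    (hn : r * m ≤ n - k) (hkn : k ≤ n)
    (hdistinct :
      ∀ᵐ z ∂((MeasureTheory.Measure.pi fun _ : Fin n => D).prod (D.map Prod.fst)),
        DistinctDists z.1 z.2) :
    ∀ᵐ F ∂(MeasureTheory.Measure.pi fun _ : Fin n => D),
      pStar n m r k D F =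
        ∑ S : Finset (Fin r), ∑ T ∈ Sᶜ.powerset,
          (-1 : ℝ) ^ T.card * (D (CST n m r k F S T)).toReal := by
  classical
  haveI hmapP : MeasureTheory.IsProbabilityMeasure (D.map Prod.fst) :=
    MeasureTheory.Measure.isProbabilityMeasure_map measurable_fst.aemeasurable
  have hae := MeasureTheory.Measure.ae_ae_of_ae_prod hdistinct
  filter_upwards [hae] with F hF
  have hzd : ∀ᵐ z ∂D, DistinctDists F z.1 :=
    MeasureTheory.ae_of_ae_map measurable_fst.aemeasurable hF
  have hcard : k ≤ ((VIdx n m r (Finset.univ : Finset (Fin r)))ᶜ).card :=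
    KnnP.card_compl_V hn hkn
  have hmeasCST : ∀ S T : Finset (Fin r), MeasurableSet (CST n m r k F S T) :=
    fun S T => KnnM.measurableSet_CST n m r k F S T hk hcard
  have hmeasErr : MeasurableSet {p : X × Bool | gS n m r k F Finset.univ p.1 ≠ p.2} :=
    KnnM.measurableSet_err n m r k F _
  have h1 : pStar n m r k D F = ∫ z, Set.indicator
      {p : X × Bool | gS n m r k F Finset.univ p.1 ≠ p.2} (1 : X × Bool → ℝ) z ∂D := by
    rw [MeasureTheory.integral_indicator_one hmeasErr]
    rfl
  have h2 : ∀ᵐ z ∂D, Set.indicator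
      {p : X × Bool | gS n m r k F Finset.univ p.1 ≠ p.2} (1 : X × Bool → ℝ) z =
      ∑ S : Finset (Fin r), ∑ T ∈ Sᶜ.powerset,
        (-1:ℝ)^T.card * Set.indicator (CST n m r k F S T) (1 : X × Bool → ℝ) z := by
    filter_upwards [hzd] with z hz
    have hpt := KnnQ.pointwise_identity n m r k F z hz.1 hk hcard
    simpa [Set.indicator_apply] using hpt
  have hint : ∀ (S T : Finset (Fin r)), MeasureTheory.Integrable
      (fun z => (-1:ℝ)^T.card * Set.indicator (CST n m r k F S T) (1 : X × Bool → ℝ) z) D :=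
    fun S T => ((MeasureTheory.integrable_const (1:ℝ)).indicator (hmeasCST S T)).const_mul _
  have h3 : pStar n m r k D F = ∫ z, (∑ S : Finset (Fin r), ∑ T ∈ Sᶜ.powerset,
      (-1:ℝ)^T.card * Set.indicator (CST n m r k F S T) (1 : X × Bool → ℝ) z) ∂D := by
    rw [h1]
    exact MeasureTheory.integral_congr_ae h2
  rw [h3, MeasureTheory.integral_finset_sum _
    (fun S _ => MeasureTheory.integrable_finset_sum _ (fun T _ => hint S T))]
  apply Finset.sum_congr rfl
  intro S _
  rw [MeasureTheory.integral_finset_sum _ (fun T _ => hint S T)]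
  apply Finset.sum_congr rfl
  intro T _
  rw [MeasureTheory.integral_const_mul, MeasureTheory.integral_indicator_one (hmeasCST S T)]
  rfl
end

section
/- μ(e_R) = Σ_{S⊆R} Σ_{T⊆R−S} (−1)^{|T|} μ(c_{S∪T} ∩ e_S), where the sum ranges over all subsets S of R and all subsets T of R−S. -/
open MeasureTheory Finset

-- inclusion-exclusion for a finite measure
lemma aux_incl_excl {Ω : Type*} [MeasurableSpace Ω] (μ : Measure Ω) [IsFiniteMeasure μ]
    {r : ℕ} (c : Fin r → Set Ω) (hc : ∀ i, MeasurableSet (c i)) (U : Finset (Fin r)) :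
    ∀ (A : Set Ω), MeasurableSet A →
    (μ (A ∩ ⋂ i ∈ U, (c i)ᶜ)).toReal =
      ∑ T ∈ U.powerset, (-1:ℝ)^T.card * (μ (A ∩ ⋂ i ∈ T, c i)).toReal := by
  classical
  induction U using Finset.induction_on with
  | empty => intro A hA; simp
  | @insert a s ha ih =>
    intro A hA
    have hB : MeasurableSet (⋂ i ∈ s, (c i)ᶜ) :=
      Finset.measurableSet_biInter s (fun i _ => (hc i).compl)
    have hset : A ∩ ⋂ i ∈ insert a s, (c i)ᶜ
        = (A ∩ ⋂ i ∈ s, (c i)ᶜ) \ c a := by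
      ext ω; simp [Set.mem_diff]; tauto
    have hkey := measure_inter_add_diff (μ := μ) (A ∩ ⋂ i ∈ s, (c i)ᶜ) (hc a)
    have hreal : (μ ((A ∩ ⋂ i ∈ s, (c i)ᶜ) \ c a)).toReal
        = (μ (A ∩ ⋂ i ∈ s, (c i)ᶜ)).toReal
          - (μ ((A ∩ ⋂ i ∈ s, (c i)ᶜ) ∩ c a)).toReal := by
      have := congrArg ENNReal.toReal hkey
      rw [ENNReal.toReal_add (measure_ne_top μ _) (measure_ne_top μ _)] at this
      linarith
    have hset2 : (A ∩ ⋂ i ∈ s, (c i)ᶜ) ∩ c a = (A ∩ c a) ∩ ⋂ i ∈ s, (c i)ᶜ := by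
      ext ω; simp; tauto
    rw [hset, hreal, hset2, ih A hA, ih (A ∩ c a) (hA.inter (hc a)),
      Finset.sum_powerset_insert ha]
    have hmatch : ∀ T ∈ s.powerset,
        (-1:ℝ)^(insert a T).card * (μ (A ∩ ⋂ i ∈ insert a T, c i)).toReal
        = -((-1:ℝ)^T.card * (μ ((A ∩ c a) ∩ ⋂ i ∈ T, c i)).toReal) := by
      intro T hT
      have haT : a ∉ T := fun h => ha (Finset.mem_powerset.mp hT h)
      have hTi : A ∩ ⋂ i ∈ insert a T, c i = (A ∩ c a) ∩ ⋂ i ∈ T, c i := by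
        ext ω; simp; tauto
      rw [Finset.card_insert_of_notMem haT, hTi, pow_succ]
      ring
    rw [Finset.sum_congr rfl hmatch]
    rw [Finset.sum_neg_distrib]
    ring

lemma aux_partition {Ω : Type*} [MeasurableSpace Ω] (μ : Measure Ω) [IsFiniteMeasure μ]
    {r : ℕ} (c : Fin r → Set Ω) (hc : ∀ i, MeasurableSet (c i))
    (s : Set Ω) (hs : MeasurableSet s) :
    (μ s).toReal = ∑ S : Finset (Fin r),
      (μ ((⋂ i ∈ S, c i) ∩ (⋂ i ∈ Sᶜ, (c i)ᶜ) ∩ s)).toReal := by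
  classical
  set b : Finset (Fin r) → Set Ω :=
    fun S => (⋂ i ∈ S, c i) ∩ (⋂ i ∈ Sᶜ, (c i)ᶜ) with hb
  have hbmem : ∀ S ω, ω ∈ b S ↔ ∀ i, (i ∈ S ↔ ω ∈ c i) := by
    intro S ω
    simp only [hb, Set.mem_inter_iff, Set.mem_iInter, Set.mem_compl_iff,
      Finset.mem_compl]
    constructor
    · rintro ⟨h1, h2⟩ i
      constructor
      · exact h1 i
      · intro hci; by_contra hiS; exact h2 i hiS hci
    · intro h; exact ⟨fun i hi => (h i).1 hi, fun i hi hci => hi ((h i).2 hci)⟩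
  have hmeas : ∀ S, MeasurableSet (b S) := fun S =>
    (Finset.measurableSet_biInter S (fun i _ => hc i)).inter
      (Finset.measurableSet_biInter Sᶜ (fun i _ => (hc i).compl))
  have hcover : s = ⋃ S ∈ (Finset.univ : Finset (Finset (Fin r))), b S ∩ s := by
    ext ω
    simp only [Set.mem_iUnion, Finset.mem_univ, Set.mem_inter_iff, exists_prop,
      true_and]
    constructor
    · intro hω
      refine ⟨Finset.univ.filter (fun i => ω ∈ c i), ?_, hω⟩
      rw [hbmem]; intro i; simp
    · rintro ⟨S, _, hω⟩; exact hω
  have hdisj : ((Finset.univ : Finset (Finset (Fin r))) : Set (Finset (Fin r))).Pairwise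
      (Function.onFun Disjoint (fun S => b S ∩ s)) := by
    intro S _ S' _ hne
    rw [Function.onFun, Set.disjoint_left]
    rintro ω ⟨h1, _⟩ ⟨h2, _⟩
    apply hne
    ext i
    rw [(hbmem S ω).mp h1 i, (hbmem S' ω).mp h2 i]
  have hsum := measure_biUnion_finset (μ := μ) hdisj (fun S _ => (hmeas S).inter hs)
  nth_rewrite 1 [hcover]
  rw [hsum, ENNReal.toReal_sum (fun S _ => measure_ne_top μ _)]

/-- For measurable events `c_1, …, c_r` in a probability space `(Ω, μ)`, with
`c_S = ∩_{i∈S} c_i` and `b_S = c_S ∩ ∩_{i∈R−S} c_iᶜ`, and a family of measurable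
events `(e_S)_{S⊆R}` such that `b_S ∩ e_S = b_S ∩ e_R` for every `S`:
`μ(e_R) = Σ_{S⊆R} Σ_{T⊆R−S} (−1)^{|T|} μ(c_{S∪T} ∩ e_S)`. -/
theorem measure_family_inclusion_exclusion
    {Ω : Type*} [MeasurableSpace Ω] (μ : Measure Ω) [IsFiniteMeasure μ]
    (r : ℕ) (hr : 1 ≤ r) (c : Fin r → Set Ω) (e : Finset (Fin r) → Set Ω)
    (hc : ∀ i, MeasurableSet (c i)) (he : ∀ S, MeasurableSet (e S))
    (hbe : ∀ S : Finset (Fin r),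
      (⋂ i ∈ S, c i) ∩ (⋂ i ∈ Sᶜ, (c i)ᶜ) ∩ e S =
        (⋂ i ∈ S, c i) ∩ (⋂ i ∈ Sᶜ, (c i)ᶜ) ∩ e Finset.univ) :
    (μ (e Finset.univ)).toReal =
      ∑ S : Finset (Fin r), ∑ T ∈ Sᶜ.powerset,
        (-1 : ℝ) ^ T.card * (μ ((⋂ i ∈ S ∪ T, c i) ∩ e S)).toReal := by
  classical
  have hstep : ∀ S : Finset (Fin r),
      ∑ T ∈ Sᶜ.powerset, (-1 : ℝ) ^ T.card * (μ ((⋂ i ∈ S ∪ T, c i) ∩ e S)).toReal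
      = (μ ((⋂ i ∈ S, c i) ∩ (⋂ i ∈ Sᶜ, (c i)ᶜ) ∩ e Finset.univ)).toReal := by
    intro S
    have hA : MeasurableSet ((⋂ i ∈ S, c i) ∩ e S) :=
      (Finset.measurableSet_biInter S (fun i _ => hc i)).inter (he S)
    have h1 : ∀ T ∈ Sᶜ.powerset,
        (-1 : ℝ) ^ T.card * (μ ((⋂ i ∈ S ∪ T, c i) ∩ e S)).toReal
        = (-1 : ℝ) ^ T.card * (μ (((⋂ i ∈ S, c i) ∩ e S) ∩ ⋂ i ∈ T, c i)).toReal := by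
      intro T _
      have hst : (⋂ i ∈ S ∪ T, c i) ∩ e S = ((⋂ i ∈ S, c i) ∩ e S) ∩ ⋂ i ∈ T, c i := by
        ext ω; simp [or_imp, forall_and]; tauto
      rw [hst]
    rw [Finset.sum_congr rfl h1, ← aux_incl_excl μ c hc Sᶜ _ hA]
    have : ((⋂ i ∈ S, c i) ∩ e S) ∩ ⋂ i ∈ Sᶜ, (c i)ᶜ
        = (⋂ i ∈ S, c i) ∩ (⋂ i ∈ Sᶜ, (c i)ᶜ) ∩ e S := by
      ext ω; simp; tauto
    rw [this, hbe S]
  rw [Finset.sum_congr rfl (fun S _ => hstep S)]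
  exact aux_partition μ c hc _ (he _)
end

section
/- For all integers N, r, m, k with r ≥ 1, m ≥ 2, k ≥ 1, and rm + k ≤ N, the hypergeometric tail satisfies Σ_{i=r}^{k+r−1} C(k+r−1, i)·C(N−(k+r−1), rm−i) / C(N, rm) ≤ ( (k+r−1)·m/N )^r · e^r. -/
open Finset

private lemma hg_step (N M : ℕ) (hM : 1 ≤ M) (hN : 1 ≤ N) :
    N * (N - 1).choose (M - 1) = M * N.choose M := by
  obtain ⟨a, rfl⟩ : ∃ a, N = a + 1 := ⟨N - 1, by omega⟩
  obtain ⟨b, rfl⟩ : ∃ b, M = b + 1 := ⟨M - 1, by omega⟩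
  simpa [Nat.mul_comm] using Nat.add_one_mul_choose_eq a b

private lemma hg_pow (r : ℕ) : ∀ N M : ℕ, r ≤ M → M ≤ N →
    N ^ r * (N - r).choose (M - r) ≤ M ^ r * N.choose M := by
  induction r with
  | zero => simp
  | succ r ih =>
    intro N M h1 h2
    have key : (N - r) * ((N - r - 1).choose (M - r - 1))
        = (M - r) * (N - r).choose (M - r) := hg_step (N - r) (M - r) (by omega) (by omega)
    have key2 : N * (M - r) ≤ M * (N - r) := by
      obtain ⟨a, rfl⟩ : ∃ a, M = a + r := ⟨M - r, by omega⟩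
      obtain ⟨b, rfl⟩ : ∃ b, N = b + r := ⟨N - r, by omega⟩
      have hab : a ≤ b := by omega
      simp only [Nat.add_sub_cancel]
      calc (b + r) * a = a * b + r * a := by ring
        _ ≤ a * b + r * b := Nat.add_le_add_left (Nat.mul_le_mul le_rfl hab) _
        _ = (a + r) * b := by ring
    have h3 : N * ((N - r - 1).choose (M - r - 1)) * (N - r)
        ≤ M * ((N - r).choose (M - r)) * (N - r) := by
      calc N * ((N - r - 1).choose (M - r - 1)) * (N - r)
          = N * ((N - r) * ((N - r - 1).choose (M - r - 1))) := by ring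
        _ = (N * (M - r)) * ((N - r).choose (M - r)) := by rw [key]; ring
        _ ≤ (M * (N - r)) * ((N - r).choose (M - r)) := Nat.mul_le_mul key2 le_rfl
        _ = M * ((N - r).choose (M - r)) * (N - r) := by ring
    have h4 : N * ((N - r - 1).choose (M - r - 1)) ≤ M * ((N - r).choose (M - r)) :=
      Nat.le_of_mul_le_mul_right h3 (by omega)
    have hsub1 : N - (r + 1) = N - r - 1 := by omega
    have hsub2 : M - (r + 1) = M - r - 1 := by omega
    rw [hsub1, hsub2]
    calc N ^ (r + 1) * (N - r - 1).choose (M - r - 1)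
        = N ^ r * (N * (N - r - 1).choose (M - r - 1)) := by ring
      _ ≤ N ^ r * (M * (N - r).choose (M - r)) := Nat.mul_le_mul le_rfl h4
      _ = M * (N ^ r * (N - r).choose (M - r)) := by ring
      _ ≤ M * (M ^ r * N.choose M) := Nat.mul_le_mul le_rfl (ih N M (by omega) h2)
      _ = M ^ (r + 1) * N.choose M := by ring

private lemma hg_union (n r M L : ℕ) (hrn : r ≤ n) :
    (∑ i ∈ Finset.Icc r n, if i ≤ M then n.choose i * L.choose (M - i) else 0)
      ≤ n.choose r * (n - r + L).choose (M - r) := by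
  classical
  rw [← Finset.sum_filter]
  set S := (Finset.Icc r n).filter (fun i => i ≤ M) with hS
  have hmem : ∀ i ∈ S, r ≤ i ∧ i ≤ n ∧ i ≤ M := by
    intro i hi
    simp only [hS, Finset.mem_filter, Finset.mem_Icc] at hi
    omega
  have hterm : ∀ i ∈ S, n.choose i * L.choose (M - i)
      ≤ n.choose r * ((n - r).choose (i - r) * L.choose (M - i)) := by
    intro i hi
    obtain ⟨h1, h2, h3⟩ := hmem i hi
    have hp : 1 ≤ i.choose r := Nat.choose_pos h1
    have heq : n.choose i * i.choose r = n.choose r * (n - r).choose (i - r) :=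
      Nat.choose_mul h1
    calc n.choose i * L.choose (M - i)
        ≤ (n.choose i * i.choose r) * L.choose (M - i) :=
          Nat.mul_le_mul (Nat.le_mul_of_pos_right _ hp) le_rfl
      _ = n.choose r * ((n - r).choose (i - r) * L.choose (M - i)) := by rw [heq]; ring
  calc (∑ i ∈ S, n.choose i * L.choose (M - i))
      ≤ ∑ i ∈ S, n.choose r * ((n - r).choose (i - r) * L.choose (M - i)) :=
        Finset.sum_le_sum hterm
    _ = n.choose r * ∑ i ∈ S, (n - r).choose (i - r) * L.choose (M - i) :=
        (Finset.mul_sum _ _ _).symm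
    _ ≤ n.choose r * (n - r + L).choose (M - r) := by
        refine Nat.mul_le_mul le_rfl ?_
        have himg : (∑ i ∈ S, (n - r).choose (i - r) * L.choose (M - i))
            = ∑ p ∈ S.image (fun i => (i - r, M - i)),
                (n - r).choose p.1 * L.choose p.2 := by
          rw [Finset.sum_image]
          intro x hx y hy hxy
          obtain ⟨hx1, _, hx3⟩ := hmem x hx
          obtain ⟨hy1, _, _⟩ := hmem y hy
          have := congrArg Prod.fst hxy
          simp only at this
          omega
        rw [himg]
        have hsub : S.image (fun i => (i - r, M - i)) ⊆ Finset.HasAntidiagonal.antidiagonal (M - r) := by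
          intro p hp
          obtain ⟨i, hi, rfl⟩ := Finset.mem_image.mp hp
          obtain ⟨h1, _, h3⟩ := hmem i hi
          simp only [Finset.HasAntidiagonal.mem_antidiagonal]
          omega
        calc (∑ p ∈ S.image (fun i => (i - r, M - i)), (n - r).choose p.1 * L.choose p.2)
            ≤ ∑ p ∈ Finset.HasAntidiagonal.antidiagonal (M - r), (n - r).choose p.1 * L.choose p.2 :=
              Finset.sum_le_sum_of_subset hsub
          _ = (n - r + L).choose (M - r) := (Nat.add_choose_eq _ _ _).symm

/-- Hypergeometric tail bound (following Chvátal): for integers `N, r, m, k` with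
`r ≥ 1`, `m ≥ 2`, `k ≥ 1` and `rm + k ≤ N`,
`Σ_{i=r}^{k+r−1} C(k+r−1, i)·C(N−(k+r−1), rm−i) / C(N, rm) ≤ ((k+r−1)·m/N)^r · e^r`
(where terms with `rm − i < 0` vanish). -/
theorem hypergeometric_tail_bound (N r m k : ℕ)
    (hr : 1 ≤ r) (hm : 2 ≤ m) (hk : 1 ≤ k) (hN : r * m + k ≤ N) :
    (∑ i ∈ Finset.Icc r (k + r - 1),
        if i ≤ r * m then
          ((k + r - 1).choose i : ℝ) * ((N - (k + r - 1)).choose (r * m - i)) /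
            (N.choose (r * m))
        else 0)
      ≤ (((k : ℝ) + r - 1) * m / N) ^ r * Real.exp 1 ^ r := by
  have hrM : r ≤ r * m := Nat.le_mul_of_pos_right r (by omega)
  have hMN : r * m ≤ N := by omega
  have hnN : k + r - 1 ≤ N := by omega
  have hrn : r ≤ k + r - 1 := by omega
  have hN0 : (0:ℝ) < N := by
    have : 0 < N := by omega
    exact_mod_cast this
  have hc0 : (0:ℝ) < (N.choose (r * m) : ℝ) := by
    exact_mod_cast Nat.choose_pos hMN
  set n := k + r - 1 with hn
  set M := r * m with hM
  -- rewrite LHS as a cast of a natural sum divided by choose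
  have hL : (∑ i ∈ Finset.Icc r n,
        if i ≤ M then
          ((n.choose i : ℝ) * ((N - n).choose (M - i)) / (N.choose M))
        else 0)
      = ((∑ i ∈ Finset.Icc r n,
          if i ≤ M then n.choose i * (N - n).choose (M - i) else 0 : ℕ) : ℝ)
        / (N.choose M : ℝ) := by
    rw [Nat.cast_sum, Finset.sum_div]
    refine Finset.sum_congr rfl fun i _ => ?_
    split
    · push_cast; ring
    · rw [Nat.cast_zero, zero_div]
  rw [hL]
  have key := hg_union n r M (N - n) hrn
  have hNr : n - r + (N - n) = N - r := by omega
  rw [hNr] at key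
  have hpow := hg_pow r N M hrM hMN
  have hcast1 : ((∑ i ∈ Finset.Icc r n,
      if i ≤ M then n.choose i * (N - n).choose (M - i) else 0 : ℕ) : ℝ)
      ≤ ((n.choose r * (N - r).choose (M - r) : ℕ) : ℝ) := by exact_mod_cast key
  have step1 : ((∑ i ∈ Finset.Icc r n,
      if i ≤ M then n.choose i * (N - n).choose (M - i) else 0 : ℕ) : ℝ) / (N.choose M : ℝ)
      ≤ ((n.choose r * (N - r).choose (M - r) : ℕ) : ℝ) / (N.choose M : ℝ) :=
    by gcongr
  have step2 : ((n.choose r * (N - r).choose (M - r) : ℕ) : ℝ) / (N.choose M : ℝ)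
      ≤ (n.choose r : ℝ) * ((M : ℝ) ^ r / (N : ℝ) ^ r) := by
    push_cast
    rw [mul_div_assoc]
    refine mul_le_mul_of_nonneg_left ?_ (by positivity)
    rw [div_le_div_iff₀ hc0 (by positivity)]
    have : ((N:ℝ) ^ r * ((N - r).choose (M - r) : ℝ)) ≤ (M:ℝ) ^ r * (N.choose M : ℝ) := by
      exact_mod_cast hpow
    nlinarith [this]
  have hx : ((n : ℕ) : ℝ) = (k : ℝ) + r - 1 := by
    have : (n : ℕ) + 1 = k + r := by omega
    have h2 : ((n : ℕ) : ℝ) + 1 = (k : ℝ) + r := by exact_mod_cast this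
    linarith
  have step3 : (n.choose r : ℝ) * ((M : ℝ) ^ r / (N : ℝ) ^ r)
      ≤ (((k : ℝ) + r - 1) * m / N) ^ r * Real.exp 1 ^ r := by
    have hA : (n.choose r : ℝ) ≤ ((n:ℝ) ^ r) / (r.factorial : ℝ) := by
      have := Nat.choose_le_pow_div (α := ℝ) r n
      simpa using this
    have hB : ((r:ℝ)) ^ r / (r.factorial : ℝ) ≤ Real.exp 1 ^ r := by
      rw [← Real.exp_nat_mul, mul_one]
      exact Real.pow_div_factorial_le_exp (r:ℝ) (by positivity) r
    have h5 : (n.choose r : ℝ) * (r:ℝ) ^ r ≤ (n:ℝ) ^ r * Real.exp 1 ^ r := by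
      calc (n.choose r : ℝ) * (r:ℝ) ^ r
          ≤ ((n:ℝ) ^ r / (r.factorial : ℝ)) * (r:ℝ) ^ r := by
            refine mul_le_mul_of_nonneg_right hA (by positivity)
        _ = (n:ℝ) ^ r * ((r:ℝ) ^ r / (r.factorial : ℝ)) := by ring
        _ ≤ (n:ℝ) ^ r * Real.exp 1 ^ r := by
            refine mul_le_mul_of_nonneg_left hB (by positivity)
    have hMcast : ((M : ℕ) : ℝ) = (r : ℝ) * m := by rw [hM]; push_cast; ring
    have h6 := mul_le_mul_of_nonneg_right h5
      (show (0:ℝ) ≤ (m:ℝ) ^ r / (N:ℝ) ^ r by positivity)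
    calc (n.choose r : ℝ) * ((M : ℝ) ^ r / (N : ℝ) ^ r)
        = ((n.choose r : ℝ) * (r:ℝ) ^ r) * ((m:ℝ) ^ r / (N:ℝ) ^ r) := by
          rw [hMcast, mul_pow]; ring
      _ ≤ ((n:ℝ) ^ r * Real.exp 1 ^ r) * ((m:ℝ) ^ r / (N:ℝ) ^ r) := h6
      _ = ((n:ℝ) * m / N) ^ r * Real.exp 1 ^ r := by
          rw [div_pow, mul_pow]; ring
      _ = (((k : ℝ) + r - 1) * m / N) ^ r * Real.exp 1 ^ r := by rw [hx]
  exact le_trans step1 (le_trans step2 step3)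
end

section
/- For every integer r ≥ 1 and every real δ > 0, Σ_{j=0}^{r−1} C(r, j) · 2 · ( δ / (2·r·α(δ)) )^(r−j) ≤ δ. -/
open Finset

/-- For every integer `r ≥ 1` and real `δ > 0`, with `α(δ) = (δ/2)/ln(1 + δ/2)`:
`Σ_{j=0}^{r−1} C(r,j)·2·(δ/(2rα(δ)))^(r−j) ≤ δ`. -/
theorem delta_allocation_valid (r : ℕ) (hr : 1 ≤ r) (δ : ℝ) (hδ : 0 < δ) :
    ∑ j ∈ Finset.range r,
        (r.choose j : ℝ) * 2 *
          (δ / (2 * r * ((δ / 2) / Real.log (1 + δ / 2)))) ^ (r - j)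
      ≤ δ := by
  have hr0 : (0:ℝ) < r := by exact_mod_cast hr
  set L := Real.log (1 + δ / 2) with hLdef
  have hL0 : 0 < L := Real.log_pos (by linarith)
  have hsimp : δ / (2 * r * ((δ / 2) / L)) = L / r := by
    field_simp
  rw [hsimp]
  set x := L / (r:ℝ) with hxdef
  have hx0 : 0 < x := div_pos hL0 hr0
  -- sum equals 2*((1+x)^r - 1)
  have hsum : ∑ j ∈ Finset.range r, (r.choose j : ℝ) * 2 * x ^ (r - j)
      = 2 * ((1 + x) ^ r - 1) := by
    have hbin : (x + 1) ^ r = ∑ k ∈ Finset.range (r + 1),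
        x ^ k * 1 ^ (r - k) * (r.choose k : ℝ) := add_pow x 1 r
    have hrefl : ∑ j ∈ Finset.range r, (r.choose j : ℝ) * 2 * x ^ (r - j)
        = ∑ j ∈ Finset.range r, (r.choose (r - 1 - j) : ℝ) * 2 * x ^ (r - (r - 1 - j)) := by
      exact (Finset.sum_range_reflect (fun j => (r.choose j : ℝ) * 2 * x ^ (r - j)) r).symm
    rw [hrefl]
    have hterm : ∀ j ∈ Finset.range r,
        (r.choose (r - 1 - j) : ℝ) * 2 * x ^ (r - (r - 1 - j))
          = 2 * ((r.choose (j + 1) : ℝ) * x ^ (j + 1)) := by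
      intro j hj
      have hj' : j < r := Finset.mem_range.mp hj
      have h1 : r - 1 - j = r - (j + 1) := by omega
      have h2 : r - (r - (j + 1)) = j + 1 := by omega
      rw [h1, h2, Nat.choose_symm (by omega : j + 1 ≤ r)]
      ring
    rw [Finset.sum_congr rfl hterm, ← Finset.mul_sum]
    congr 1
    have : ∑ j ∈ Finset.range r, (r.choose (j + 1) : ℝ) * x ^ (j + 1)
        = ∑ k ∈ Finset.range (r + 1), (r.choose k : ℝ) * x ^ k - 1 := by
      rw [Finset.sum_range_succ' (fun k => (r.choose k : ℝ) * x ^ k) r]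
      simp
    have hbin' : (1 + x) ^ r = ∑ k ∈ Finset.range (r + 1), (r.choose k : ℝ) * x ^ k := by
      rw [add_comm 1 x, hbin]
      apply Finset.sum_congr rfl
      intro k _
      ring
    rw [this, hbin']
  rw [hsum]
  -- (1+x)^r ≤ exp L = 1 + δ/2
  have hxe : 1 + x ≤ Real.exp x := by
    have := Real.add_one_le_exp x
    linarith
  have hpow : (1 + x) ^ r ≤ Real.exp x ^ r :=
    pow_le_pow_left₀ (by linarith) hxe r
  have hrx : (r:ℝ) * x = L := by
    rw [hxdef]
    field_simp
  have hexp : Real.exp x ^ r = 1 + δ / 2 := by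
    rw [← Real.exp_nat_mul, hrx, hLdef, Real.exp_log (by linarith)]
  nlinarith [hpow, hexp]
end
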